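/- Key step in the proof of Claim 1, part 2: Suppose b(v_π) = false. Then every member of the family F(π, b) other than the singletons from item (iv) is disjoint from the set {v_π} × Fin ℓ (the leaf-block of the π-path leaf). Consequently, each of the ℓ points (v_π, i), i ∈ Fin ℓ, can only be covered by its own singleton {(v_π, i)}, which belongs to F(π, b). -/
import Mathlib


/-- The cylinder of a word `w` over `Fin t` in the universe
`X = (Fin (k−1) → Fin t) × Fin l`: the pairs `(x, i)` such that the leaf `x` agrees
with `w` on the first `length w` coordinates. -/
def cylX (k t l : ℕ) (w : List (Fin t)) : Set ((Fin (k - 1) → Fin t) × Fin l) :=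
  {p | ∀ i : Fin (k - 1), ∀ h : (i : ℕ) < w.length, p.1 i = w.get ⟨i, h⟩}

/-- The `π`-path words: `w_0 = []` and `w_{i+1} = w_i ++ [π(w_i)]`. -/
def pathWord {t : ℕ} (π : List (Fin t) → Fin t) : ℕ → List (Fin t)
  | 0 => []
  | i + 1 => pathWord π i ++ [π (pathWord π i)]

/-- The leaf `v_π` determined by the `π`-path: `v_π(i) = π(w_i)`. -/
def pathLeaf (k t : ℕ) (π : List (Fin t) → Fin t) : Fin (k - 1) → Fin t :=
  fun i => π (pathWord π (i : ℕ))

/-- The set family `F(π, b)`: (i) the root set `X \ C([π([])])`; (ii) the sets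
`C(w) \ C(w ++ [π(w)])` for words `w` with `1 ≤ |w| ≤ k−2`; (iii) the leaf cylinders `C(x)`
for leaves `x` with `b(x) = true`; (iv) the singletons `{e}` for `e ∈ C([π([])])`. -/
def coverFamily (k t l : ℕ) (π : List (Fin t) → Fin t)
    (b : (Fin (k - 1) → Fin t) → Bool) : Set (Set ((Fin (k - 1) → Fin t) × Fin l)) :=
  {S | S = Set.univ \ cylX k t l [π []]} ∪
  {S | ∃ w : List (Fin t), 1 ≤ w.length ∧ w.length ≤ k - 2 ∧
        S = cylX k t l w \ cylX k t l (w ++ [π w])} ∪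
  {S | ∃ x : Fin (k - 1) → Fin t, b x = true ∧ S = cylX k t l (List.ofFn x)} ∪
  {S | ∃ e ∈ cylX k t l [π []], S = {e}}

set_option linter.unusedVariables false

lemma pathWord_length {t : ℕ} (π : List (Fin t) → Fin t) (n : ℕ) :
    (pathWord π n).length = n := by
  induction n with
  | zero => rfl
  | succ n ih => simp [pathWord, ih]

lemma pathWord_get {t : ℕ} (π : List (Fin t) → Fin t) (n i : ℕ)
    (h : i < (pathWord π n).length) :
    (pathWord π n).get ⟨i, h⟩ = π (pathWord π i) := by
  induction n with
  | zero => simp [pathWord_length] at h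
  | succ n ih =>
    have h' := h
    rw [pathWord_length] at h'
    rcases lt_or_eq_of_le (Nat.lt_succ_iff.mp h') with hlt | heq
    · have hl : i < (pathWord π n).length := by rw [pathWord_length]; exact hlt
      have : (pathWord π (n+1)).get ⟨i, h⟩ = (pathWord π n).get ⟨i, hl⟩ := by
        simp only [pathWord, List.get_eq_getElem]
        exact List.getElem_append_left hl
      rw [this, ih]
    · subst heq
      simp [pathWord, List.get_eq_getElem, List.getElem_append_right (Nat.le_refl _),
        pathWord_length]

lemma leaf_mem_pathCyl (k t l : ℕ) (π : List (Fin t) → Fin t) (n : ℕ)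
    (j : Fin l) :
    (pathLeaf k t π, j) ∈ cylX k t l (pathWord π n) := by
  intro i h
  simpa [pathLeaf] using (pathWord_get π n i h).symm

lemma word_eq_pathWord (k t l : ℕ) (π : List (Fin t) → Fin t) (w : List (Fin t))
    (hw : w.length ≤ k - 1) (j : Fin l)
    (hm : (pathLeaf k t π, j) ∈ cylX k t l w) :
    w = pathWord π w.length := by
  apply List.ext_get (by rw [pathWord_length])
  intro i h1 h2
  have hik : i < k - 1 := lt_of_lt_of_le h1 hw
  have := hm ⟨i, hik⟩ h1
  simp only [pathLeaf] at this
  rw [pathWord_get, ← this]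

lemma pathWord_one {t : ℕ} (π : List (Fin t) → Fin t) : pathWord π 1 = [π []] := by
  simp [pathWord]


/-- Key step in the proof of Claim 1, part 2: if `b(v_π) = false`, then every member of
`F(π, b)` other than a singleton from item (iv) is disjoint from the leaf-block
`{v_π} × Fin l`; consequently each point `(v_π, i)` can only be covered by its own
singleton `{(v_π, i)}`, which belongs to `F(π, b)`. -/
theorem leaf_block_only_covered_by_singletons
    (k t l : ℕ) (hk : 2 ≤ k) (ht : 1 ≤ t) (hl : 1 ≤ l)
    (π : List (Fin t) → Fin t) (b : (Fin (k - 1) → Fin t) → Bool)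
    (hb : b (pathLeaf k t π) = false) :
    (∀ S ∈ coverFamily k t l π b,
        (¬ ∃ e ∈ cylX k t l [π []], S = {e}) →
        S ∩ ({pathLeaf k t π} ×ˢ (Set.univ : Set (Fin l))) = ∅) ∧
    (∀ i : Fin l,
        ({(pathLeaf k t π, i)} : Set ((Fin (k - 1) → Fin t) × Fin l)) ∈ coverFamily k t l π b ∧
        ∀ S ∈ coverFamily k t l π b, (pathLeaf k t π, i) ∈ S →
          S = {(pathLeaf k t π, i)}) := by
  
  have hroot : ∀ j : Fin l, (pathLeaf k t π, j) ∈ cylX k t l [π []] := by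
    intro j
    rw [← pathWord_one π]
    exact leaf_mem_pathCyl k t l π 1 j
  have part1 : ∀ S ∈ coverFamily k t l π b,
      (¬ ∃ e ∈ cylX k t l [π []], S = {e}) →
      S ∩ ({pathLeaf k t π} ×ˢ (Set.univ : Set (Fin l))) = ∅ := by
    intro S hS hns
    ext p
    simp only [Set.mem_inter_iff, Set.mem_prod, Set.mem_singleton_iff, Set.mem_univ,
      and_true, Set.mem_empty_iff_false, iff_false, not_and]
    intro hpS hp1
    rcases hS with ((h | h) | h) | h
    · -- root set
      rw [h] at hpS
      exact hpS.2 (by rw [show p = (pathLeaf k t π, p.2) from Prod.ext hp1 rfl]; exact hroot p.2)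
    · -- middle sets
      obtain ⟨w, hw1, hw2, rfl⟩ := h
      have hwk : w.length ≤ k - 1 := le_trans hw2 (Nat.sub_le_sub_left (by norm_num) k)
      have hp : p = (pathLeaf k t π, p.2) := Prod.ext hp1 rfl
      rw [hp] at hpS
      have hweq := word_eq_pathWord k t l π w hwk p.2 hpS.1
      apply hpS.2
      have : w ++ [π w] = pathWord π (w.length + 1) := by
        rw [pathWord]; rw [← hweq]
      rw [this]
      exact leaf_mem_pathCyl k t l π _ p.2
    · -- leaf cylinders
      obtain ⟨x, hx, rfl⟩ := h
      have hp : p = (pathLeaf k t π, p.2) := Prod.ext hp1 rfl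
      rw [hp] at hpS
      have hxeq : x = pathLeaf k t π := by
        funext i
        have hi : (i : ℕ) < (List.ofFn x).length := by
          rw [List.length_ofFn]; exact i.2
        have := hpS i hi
        have h2 : (List.ofFn x).get ⟨↑i, hi⟩ = x i := by
          simp [List.get_ofFn]
        exact (this.trans h2).symm
      rw [hxeq] at hx
      rw [hb] at hx
      exact Bool.false_ne_true hx
    · exact absurd h hns
  refine ⟨part1, fun i => ?_⟩
  constructor
  · exact Or.inr ⟨(pathLeaf k t π, i), hroot i, rfl⟩
  · intro S hS hpS
    by_cases hsing : ∃ e ∈ cylX k t l [π []], S = {e}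
    · obtain ⟨e, -, rfl⟩ := hsing
      rw [Set.mem_singleton_iff] at hpS
      rw [hpS]
    · exfalso
      have := part1 S hS hsing
      have hmem : (pathLeaf k t π, i) ∈ S ∩ ({pathLeaf k t π} ×ˢ (Set.univ : Set (Fin l))) :=
        ⟨hpS, rfl, trivial⟩
      rw [this] at hmem
      exact hmem
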